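/- (Combing and cabling commute, cable far from the crossing) In the Artin braid group B_{m+n}, for every 1 ≤ k ≤ m−1, every 1 ≤ i ≤ m with i ≠ k and i ≠ k+1, and every 1 ≤ q ≤ n, the fixed crossing Σ_k commutes with the positive looping of a q-strand cable around the i-th fixed strand: Σ_k · ( ∏_{l=0}^{q−1} λ_l a_i λ_l^{−1} ) = ( ∏_{l=0}^{q−1} λ_l a_i λ_l^{−1} ) · Σ_k, products taken left to right in increasing l. -/

import Mathlib

/-- Defining relations of the Artin braid group on `N` strands, with generators
indexed by `Fin (N-1)` (index `s : Fin (N-1)` corresponds to the 1-based generator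
`σ_{s+1}`): the far commutation relations and the braid relations. -/
def braidRels (N : ℕ) : Set (FreeGroup (Fin (N - 1))) :=
  {x | ∃ s t : Fin (N - 1), (s : ℕ) + 2 ≤ (t : ℕ) ∧
      x = FreeGroup.of s * FreeGroup.of t * (FreeGroup.of s)⁻¹ * (FreeGroup.of t)⁻¹} ∪
  {x | ∃ s t : Fin (N - 1), (s : ℕ) + 1 = (t : ℕ) ∧
      x = FreeGroup.of s * FreeGroup.of t * FreeGroup.of s *
          (FreeGroup.of t)⁻¹ * (FreeGroup.of s)⁻¹ * (FreeGroup.of t)⁻¹}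

/-- The Artin braid group on `N` strands. -/
abbrev BraidGroup (N : ℕ) := PresentedGroup (braidRels N)

/-- The generator `σ_s` (1-based, `1 ≤ s ≤ N-1`); junk value `1` out of range. -/
def sig (N s : ℕ) : BraidGroup N :=
  if h : 1 ≤ s ∧ s ≤ N - 1 then PresentedGroup.of ⟨s - 1, by omega⟩ else 1

/-- The loop element `a_i = σ_m σ_{m-1} ⋯ σ_{i+1} · σ_i² · σ_{i+1}⁻¹ ⋯ σ_m⁻¹`
(so `a_m = σ_m²`) in the braid group on `N` strands, `m` of which are fixed. -/
def loop (N m i : ℕ) : BraidGroup N :=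
  (((List.range (m - i)).map (fun l => sig N (m - l))).prod) * (sig N i) ^ 2 *
    (((List.range (m - i)).map (fun l => sig N (m - l))).prod)⁻¹

/-- `λ_l := σ_{m+l} σ_{m+l-1} ⋯ σ_{m+1}`, with `λ_0 := 1`. -/
def lam (N m l : ℕ) : BraidGroup N :=
  ((List.range l).map (fun t => sig N (m + l - t))).prod

/-- The positive looping `∏_{l=0}^{q-1} λ_l a_j λ_l⁻¹` of a `q`-strand cable of
moving strands around the `j`-th fixed strand. -/
def cable (N m j q : ℕ) : BraidGroup N :=
  ((List.range q).map (fun l => lam N m l * loop N m j * (lam N m l)⁻¹)).prod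

lemma rel_eq_one {N : ℕ} {r : FreeGroup (Fin (N-1))} (hr : r ∈ braidRels N) :
    PresentedGroup.mk (braidRels N) r = 1 :=
  (QuotientGroup.eq_one_iff r).mpr (Subgroup.subset_normalClosure hr)

lemma sig_comm {N s t : ℕ} (h : s + 2 ≤ t) : Commute (sig N s) (sig N t) := by
  unfold sig
  by_cases hs : 1 ≤ s ∧ s ≤ N - 1
  · by_cases ht : 1 ≤ t ∧ t ≤ N - 1
    · simp only [dif_pos hs, dif_pos ht]
      have h2 : (PresentedGroup.of (rels := braidRels N) ⟨s-1, by omega⟩) *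
          PresentedGroup.of ⟨t-1, by omega⟩ *
          (PresentedGroup.of ⟨s-1, by omega⟩)⁻¹ * (PresentedGroup.of ⟨t-1, by omega⟩)⁻¹ = 1 := by
        have := rel_eq_one (N := N)
          (Or.inl ⟨⟨s-1, by omega⟩, ⟨t-1, by omega⟩, by simp; omega, rfl⟩)
        simp only [map_mul, map_inv] at this; exact this
      rw [mul_inv_eq_one, mul_inv_eq_iff_eq_mul] at h2
      exact h2
    · simp only [dif_neg ht]; exact Commute.one_right _
  · simp only [dif_neg hs]; exact Commute.one_left _

lemma sig_comm' {N s t : ℕ} (h : s + 2 ≤ t ∨ t + 2 ≤ s) : Commute (sig N s) (sig N t) := by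
  rcases h with h | h
  · exact sig_comm h
  · exact (sig_comm h).symm

lemma sig_braid {N s : ℕ} (h1 : 1 ≤ s) (h2 : s + 1 ≤ N - 1) :
    sig N s * sig N (s+1) * sig N s = sig N (s+1) * sig N s * sig N (s+1) := by
  have hs : 1 ≤ s ∧ s ≤ N - 1 := ⟨h1, by omega⟩
  have ht : 1 ≤ s + 1 ∧ s + 1 ≤ N - 1 := ⟨by omega, h2⟩
  unfold sig
  simp only [dif_pos hs, dif_pos ht]
  have h3 : (PresentedGroup.of (rels := braidRels N) ⟨s-1, by omega⟩) *
      PresentedGroup.of ⟨s+1-1, by omega⟩ * PresentedGroup.of ⟨s-1, by omega⟩ *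
      (PresentedGroup.of ⟨s+1-1, by omega⟩)⁻¹ * (PresentedGroup.of ⟨s-1, by omega⟩)⁻¹ *
      (PresentedGroup.of ⟨s+1-1, by omega⟩)⁻¹ = 1 := by
    have := rel_eq_one (N := N)
      (Or.inr ⟨⟨s-1, by omega⟩, ⟨s+1-1, by omega⟩, by simp; omega, rfl⟩)
    simp only [map_mul, map_inv] at this; exact this
  rw [mul_inv_eq_one, mul_inv_eq_iff_eq_mul, mul_inv_eq_iff_eq_mul] at h3
  simpa [mul_assoc] using h3

/-- Descending product `σ_a σ_{a-1} ⋯ σ_{a-j+1}` (j terms). -/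
def descD (N a : ℕ) : ℕ → BraidGroup N
  | 0 => 1
  | j + 1 => descD N a j * sig N (a - j)

lemma range_prod_eq_descD (N a j : ℕ) :
    ((List.range j).map (fun l => sig N (a - l))).prod = descD N a j := by
  induction j with
  | zero => simp [descD]
  | succ j ih => rw [List.range_succ]; simp [descD, ih]

lemma descD_split (N a j1 j2 : ℕ) :
    descD N a (j1 + j2) = descD N a j1 * descD N (a - j1) j2 := by
  induction j2 with
  | zero => simp [descD]
  | succ j2 ih =>
    show descD N a (j1 + j2 + 1) = _
    rw [descD, ih, descD, mul_assoc, Nat.sub_sub]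

lemma commute_descD {N a j : ℕ} {x : BraidGroup N}
    (h : ∀ l < j, Commute x (sig N (a - l))) : Commute x (descD N a j) := by
  induction j with
  | zero => exact Commute.one_right x
  | succ j ih =>
    rw [descD]
    exact (ih fun l hl => h l (by omega)).mul_right (h j (by omega))

/-- Abstract braid-juggling identity. -/
lemma braid_juggle {G : Type*} [Group G] {a b p x : G}
    (hab : a * b * a = b * a * b) (hap : Commute a p) (hbx : Commute b x) :
    Commute a (p * (b * (a * (x * (a⁻¹ * b⁻¹)))) * p⁻¹) := by
  have hinv : b * a⁻¹ * b⁻¹ = a⁻¹ * b⁻¹ * a := by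
    have h3 : (a⁻¹ * b⁻¹ * a)⁻¹ * (b * a⁻¹ * b⁻¹) = 1 := by
      rw [show (a⁻¹ * b⁻¹ * a)⁻¹ * (b * a⁻¹ * b⁻¹) = a⁻¹ * (b * a * b) * (a⁻¹ * b⁻¹) by group,
        ← hab]
      group
    exact (inv_mul_eq_one.mp h3).symm
  have hY : Commute a (b * (a * (x * (a⁻¹ * b⁻¹)))) := by
    show a * _ = _ * a
    calc a * (b * (a * (x * (a⁻¹ * b⁻¹))))
        = (a * b * a) * (x * (a⁻¹ * b⁻¹)) := by group
      _ = (b * a * b) * (x * (a⁻¹ * b⁻¹)) := by rw [hab]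
      _ = (b * a) * (b * x) * (a⁻¹ * b⁻¹) := by group
      _ = (b * a) * (x * b) * (a⁻¹ * b⁻¹) := by rw [hbx.eq]
      _ = (b * a * x) * (b * a⁻¹ * b⁻¹) := by group
      _ = (b * a * x) * (a⁻¹ * b⁻¹ * a) := by rw [hinv]
      _ = (b * (a * (x * (a⁻¹ * b⁻¹)))) * a := by group
  exact (hap.mul_right hY).mul_right hap.inv_right

lemma commute_sig_lam {N m k l : ℕ} (hk : k + 1 ≤ m) : Commute (sig N k) (lam N m l) := by
  unfold lam
  rw [range_prod_eq_descD]
  exact commute_descD fun t ht => sig_comm (by omega)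

lemma commute_sig_loop {N m k i : ℕ} (hm : m + 1 ≤ N) (hk1 : 1 ≤ k) (hk2 : k ≤ m - 1)
    (hi1 : 1 ≤ i) (hi2 : i ≤ m) (hik : i ≠ k) (hik1 : i ≠ k + 1) :
    Commute (sig N k) (loop N m i) := by
  unfold loop
  rw [range_prod_eq_descD]
  rcases lt_or_gt_of_ne hik with hlt | hgt
  · -- i < k : braid juggling
    set P := descD N m (m - (k+1)) with hP
    set Q := descD N (k-1) (k-1-i) with hQ
    have e : descD N m (m - i) = P * (sig N (k+1) * sig N k * Q) := by
      rw [show m - i = (m - (k+1)) + ((k+1) - i) by omega, descD_split,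
        show m - (m - (k+1)) = k + 1 by omega,
        show (k+1) - i = 2 + (k-1-i) by omega, descD_split,
        show k + 1 - 2 = k - 1 by omega]
      have : descD N (k+1) 2 = sig N (k+1) * sig N k := by
        show descD N (k+1) (1+1) = _
        rw [descD, descD, descD]
        simp
      rw [this, mul_assoc]
    set x := Q * (sig N i) ^ 2 * Q⁻¹ with hx
    have key : descD N m (m - i) * (sig N i) ^ 2 * (descD N m (m - i))⁻¹ =
        P * (sig N (k+1) * (sig N k * (x * ((sig N k)⁻¹ * (sig N (k+1))⁻¹)))) * P⁻¹ := by
      rw [e, hx]; group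
    rw [key]
    have hab : sig N k * sig N (k+1) * sig N k = sig N (k+1) * sig N k * sig N (k+1) :=
      sig_braid hk1 (by omega)
    have haP : Commute (sig N k) P :=
      commute_descD fun l hl => sig_comm (by omega)
    have hbx : Commute (sig N (k+1)) x := by
      have hQ' : Commute (sig N (k+1)) Q :=
        (commute_descD fun l hl => sig_comm' (by omega)).symm.symm
      exact (hQ'.mul_right ((sig_comm' (by omega)).pow_right 2)).mul_right hQ'.inv_right
    exact braid_juggle hab haP hbx
  · -- i ≥ k + 2
    have hC : Commute (sig N k) (descD N m (m - i)) :=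
      commute_descD fun l hl => sig_comm (by omega)
    exact (hC.mul_right ((sig_comm (by omega)).pow_right 2)).mul_right hC.inv_right

/-- Combing and cabling commute when the cable is far from the crossing: `Σ_k`
commutes with the positive looping of a `q`-strand cable around the `i`-th
fixed strand when `i ≠ k, k+1`. -/
theorem combing_cabling_commute_far (m n k i q : ℕ) (hm : 2 ≤ m) (hn : 1 ≤ n)
    (hk1 : 1 ≤ k) (hk2 : k ≤ m - 1) (hi1 : 1 ≤ i) (hi2 : i ≤ m)
    (hik : i ≠ k) (hik1 : i ≠ k + 1) (hq1 : 1 ≤ q) (hq2 : q ≤ n) :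
    sig (m + n) k * cable (m + n) m i q =
      cable (m + n) m i q * sig (m + n) k := by
  have hlam : ∀ l, Commute (sig (m+n) k) (lam (m+n) m l) :=
    fun l => commute_sig_lam (by omega)
  have hloop : Commute (sig (m+n) k) (loop (m+n) m i) :=
    commute_sig_loop (by omega) hk1 hk2 hi1 hi2 hik hik1
  unfold cable
  refine (Commute.list_prod_right _ _ fun y hy => ?_)
  simp only [List.mem_map, List.mem_range] at hy
  obtain ⟨l, -, rfl⟩ := hy
  exact ((hlam l).mul_right hloop).mul_right (hlam l).inv_right
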